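/- Let U ∈ 𝒰 and let u(re^{iθ}) = ((1 − r²)/(2π)) ∫_{−π}^{π} U(x)/(1 − 2r cos(θ − x) + r²) dx be its Poisson extension. Then for all 0 < r < 1 and θ ∈ [−π,π] with max(2|θ|, 1 − r) ≤ π one has u(re^{iθ}) ≥ (1/(4π))·(1 − r)·h_U(max(2|θ|, 1 − r)). -/
import Mathlib


open MeasureTheory Filter Set

set_option maxHeartbeats 1000000

noncomputable section

noncomputable def hU (U : ℝ → ℝ) (t : ℝ) : ℝ := ∫ x in t..Real.pi, U x / x ^ 2

def ClassU (U : ℝ → ℝ) : Prop :=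
  Continuous U ∧ (∀ t, U (-t) = U t) ∧ Function.Periodic U (2 * Real.pi) ∧
  U 0 = 0 ∧ MonotoneOn U (Set.Icc 0 Real.pi) ∧
  (∀ t, 0 < t → t ≤ Real.pi → 0 < U t) ∧
  Tendsto (fun t => hU U t) (nhdsWithin 0 (Set.Ioi 0)) atTop

noncomputable def poisson (U : ℝ → ℝ) (r θ : ℝ) : ℝ :=
  ((1 - r ^ 2) / (2 * Real.pi)) *
    ∫ x in (-Real.pi)..Real.pi, U x / (1 - 2 * r * Real.cos (θ - x) + r ^ 2)

lemma poisson_neg (U : ℝ → ℝ) (hUe : ∀ t, U (-t) = U t) (r θ : ℝ) :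
    poisson U r (-θ) = poisson U r θ := by
  unfold poisson
  congr 1
  have h := intervalIntegral.integral_comp_neg
    (a := -Real.pi) (b := Real.pi)
    (f := fun x => U x / (1 - 2 * r * Real.cos (θ - x) + r ^ 2))
  rw [neg_neg] at h
  rw [← h]
  apply intervalIntegral.integral_congr
  intro x _
  simp only
  rw [hUe]
  congr 2
  rw [show θ - -x = -(-θ - x) by ring, Real.cos_neg]

lemma key (U : ℝ → ℝ) (hU_mem : ClassU U)
    (r θ : ℝ) (hr₀ : 0 < r) (hr₁ : r < 1) (hθ0 : 0 ≤ θ)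
    (hmax : max (2 * θ) (1 - r) ≤ Real.pi) :
    (1 / (4 * Real.pi)) * (1 - r) * hU U (max (2 * θ) (1 - r)) ≤ poisson U r θ := by
  obtain ⟨hUc, hUe, hUper, hU0, hUmono, hUpos, hUtend⟩ := hU_mem
  set ρ := max (2 * θ) (1 - r) with hρ
  have hπ : 0 < Real.pi := Real.pi_pos
  have hr1' : 0 < 1 - r := by linarith
  have hρ0 : 0 < ρ := lt_max_of_lt_right hr1'
  have hρπ : ρ ≤ Real.pi := hmax
  -- U is nonneg on [-π, π]
  have hUnn : ∀ x ∈ Set.Icc (-Real.pi) Real.pi, 0 ≤ U x := by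
    intro x hx
    have habs : U x = U |x| := by
      rcases abs_cases x with ⟨h1, _⟩ | ⟨h1, _⟩
      · rw [h1]
      · rw [h1, hUe]
    rw [habs, ← hU0]
    exact hUmono ⟨le_refl 0, hπ.le⟩ ⟨abs_nonneg x, abs_le.2 ⟨hx.1, hx.2⟩⟩
      (abs_nonneg x)
  -- denominator
  set D : ℝ → ℝ := fun x => 1 - 2 * r * Real.cos (θ - x) + r ^ 2 with hD
  have hDpos : ∀ x, 0 < D x := by
    intro x
    have hc : Real.cos (θ - x) ≤ 1 := Real.cos_le_one _
    have hD2 : (1 - r) ^ 2 ≤ D x := by simp only [hD]; nlinarith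
    nlinarith
  have hDcont : Continuous D := by
    simp only [hD]
    continuity
  have hgcont : Continuous (fun x => U x / D x) :=
    hUc.div hDcont (fun x => (hDpos x).ne')
  -- key bound: D x ≤ 2 x^2 for x ∈ [ρ, π]
  have hDle : ∀ x ∈ Set.Icc ρ Real.pi, D x ≤ 2 * x ^ 2 := by
    intro x hx
    have hx1 : ρ ≤ x := hx.1
    have hθx : 2 * θ ≤ x := le_trans (le_max_left _ _) hx1
    have hrx : 1 - r ≤ x := le_trans (le_max_right _ _) hx1
    have hcos : 1 - (θ - x) ^ 2 / 2 ≤ Real.cos (θ - x) :=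
      Real.one_sub_sq_div_two_le_cos
    have h2 : Real.cos (θ - x) ≤ 1 := Real.cos_le_one _
    have h1 : 1 - Real.cos (θ - x) ≤ (θ - x) ^ 2 / 2 := by linarith
    have h2r : 2 * r * (1 - Real.cos (θ - x)) ≤ (θ - x) ^ 2 := by
      have ha := mul_le_mul_of_nonneg_left h1 (by linarith : (0:ℝ) ≤ 2 * r)
      nlinarith [sq_nonneg (θ - x)]
    have hsq : (θ - x) ^ 2 ≤ x ^ 2 := by nlinarith
    have hrsq : (1 - r) ^ 2 ≤ x ^ 2 := by nlinarith
    simp only [hD]; nlinarith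
  -- pointwise bound on [ρ, π]
  have hpt : ∀ x ∈ Set.Icc ρ Real.pi, U x / (2 * x ^ 2) ≤ U x / D x := by
    intro x hx
    have hxpos : 0 < x := lt_of_lt_of_le hρ0 hx.1
    have hUx : 0 ≤ U x := hUnn x ⟨by linarith, hx.2⟩
    gcongr
    · exact hDpos x
    · exact hDle x hx
  -- integrabilities
  have hint1 : IntervalIntegrable (fun x => U x / D x) volume (-Real.pi) ρ :=
    hgcont.intervalIntegrable _ _
  have hint2 : IntervalIntegrable (fun x => U x / D x) volume ρ Real.pi :=
    hgcont.intervalIntegrable _ _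
  have hint3 : IntervalIntegrable (fun x => U x / (2 * x ^ 2)) volume ρ Real.pi := by
    apply ContinuousOn.intervalIntegrable
    apply ContinuousOn.div hUc.continuousOn (by fun_prop)
    intro x hx
    rw [Set.uIcc_of_le hρπ] at hx
    have : 0 < x := lt_of_lt_of_le hρ0 hx.1
    positivity
  -- split the integral
  have hsplit : (∫ x in (-Real.pi)..Real.pi, U x / D x)
      = (∫ x in (-Real.pi)..ρ, U x / D x) + ∫ x in ρ..Real.pi, U x / D x :=
    (intervalIntegral.integral_add_adjacent_intervals hint1 hint2).symm
  have hleft : 0 ≤ ∫ x in (-Real.pi)..ρ, U x / D x := by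
    apply intervalIntegral.integral_nonneg (by linarith)
    intro x hx
    have hUx : 0 ≤ U x := hUnn x ⟨hx.1, le_trans hx.2 hρπ⟩
    exact div_nonneg hUx (hDpos x).le
  have hright : (∫ x in ρ..Real.pi, U x / (2 * x ^ 2))
      ≤ ∫ x in ρ..Real.pi, U x / D x := by
    apply intervalIntegral.integral_mono_on hρπ hint3 hint2
    intro x hx
    exact hpt x hx
  have hhalf : (∫ x in ρ..Real.pi, U x / (2 * x ^ 2)) = (1 / 2) * hU U ρ := by
    rw [hU, ← intervalIntegral.integral_const_mul]
    apply intervalIntegral.integral_congr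
    intro x _
    ring
  have hhnn : 0 ≤ hU U ρ := by
    apply intervalIntegral.integral_nonneg hρπ
    intro x hx
    have hxpos : 0 < x := lt_of_lt_of_le hρ0 hx.1
    have hUx : 0 ≤ U x := hUnn x ⟨by linarith, hx.2⟩
    positivity
  -- put it together
  have hItot : (1 / 2) * hU U ρ ≤ ∫ x in (-Real.pi)..Real.pi, U x / D x := by
    rw [hsplit, ← hhalf]
    linarith
  have hcpos : 0 < (1 - r ^ 2) / (2 * Real.pi) := by
    apply div_pos (by nlinarith) (by positivity)
  have hfinal : ((1 - r ^ 2) / (2 * Real.pi)) * ((1 / 2) * hU U ρ)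
      ≤ poisson U r θ := by
    rw [poisson]
    exact mul_le_mul_of_nonneg_left hItot hcpos.le
  refine le_trans ?_ hfinal
  have hc : 1 / (4 * Real.pi) * (1 - r) ≤ (1 - r ^ 2) / (2 * Real.pi) * (1 / 2) := by
    rw [div_mul_eq_mul_div, one_mul, div_mul_eq_mul_div,
      div_le_div_iff₀ (by positivity) (by positivity)]
    nlinarith [mul_nonneg (mul_nonneg hr₀.le hr1'.le) hπ.le]
  have hmul := mul_le_mul_of_nonneg_right hc hhnn
  nlinarith [hmul]

theorem stmt11 (U : ℝ → ℝ) (hU_mem : ClassU U)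
    (r θ : ℝ) (hr₀ : 0 < r) (hr₁ : r < 1)
    (hθ : θ ∈ Set.Icc (-Real.pi) Real.pi)
    (hmax : max (2 * |θ|) (1 - r) ≤ Real.pi) :
    (1 / (4 * Real.pi)) * (1 - r) * hU U (max (2 * |θ|) (1 - r)) ≤ poisson U r θ := by
  rcases le_or_gt 0 θ with h | h
  · rw [abs_of_nonneg h] at *
    exact key U hU_mem r θ hr₀ hr₁ h hmax
  · rw [abs_of_neg h] at *
    rw [← poisson_neg U hU_mem.2.1 r θ]
    exact key U hU_mem r (-θ) hr₀ hr₁ (by linarith) hmax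

end
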